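/- Let G be a group generated by a finite set X, M the submonoid of G generated by a finite set S, and G' a group generated by a finite set X', with M' a submonoid of G' generated by a finite set S' with respect to which M' is graded. Suppose φ : G → G' is a group homomorphism with φ(S) ⊆ S'. If λ' : ℕ → ℕ is a non-decreasing function satisfying λ_{S'}(h) ≤ λ'(|h|_{X'}) for all h ∈ M', then, with C = max{|φ(x)|_{X'} : x ∈ X}, M is graded with respect to S and λ_S(g) ≤ λ'(C·|g|_X) for all g ∈ M. -/

import Mathlib

/-- Word length of `g` with respect to the generating set `Y ∪ Y⁻¹`. -/
noncomputable def wlen {G : Type*} [Group G] (Y : Set G) (g : G) : ℕ :=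
  sInf {k | ∃ l : List G, (∀ a ∈ l, a ∈ Y ∨ a⁻¹ ∈ Y) ∧ l.prod = g ∧ l.length = k}

/-- The set of factorizations of `g` as products of elements of `S`. -/
def Exprs {M : Type*} [Monoid M] (S : Set M) (g : M) : Set (List M) :=
  {l | (∀ a ∈ l, a ∈ S) ∧ l.prod = g}

/-- A monoid is graded with respect to `S` if every element has only finitely many
factorizations over `S`. -/
def IsGraded {M : Type*} [Monoid M] (S : Set M) : Prop :=
  ∀ g : M, (Exprs S g).Finite

lemma exists_word {G : Type*} [Group G] {Y : Set G} {g : G}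
    (hg : g ∈ Subgroup.closure Y) :
    ∃ l : List G, (∀ a ∈ l, a ∈ Y ∨ a⁻¹ ∈ Y) ∧ l.prod = g := by
  induction hg using Subgroup.closure_induction with
  | mem a ha => exact ⟨[a], by simp [ha]⟩
  | one => exact ⟨[], by simp⟩
  | mul a b _ _ iha ihb =>
      obtain ⟨l1, h1, p1⟩ := iha
      obtain ⟨l2, h2, p2⟩ := ihb
      refine ⟨l1 ++ l2, ?_, by simp [p1, p2]⟩
      intro a ha; rcases List.mem_append.1 ha with h | h
      · exact h1 a h
      · exact h2 a h
  | inv a _ ih =>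
      obtain ⟨l, h1, p1⟩ := ih
      refine ⟨(l.map Inv.inv).reverse, ?_, ?_⟩
      · intro a ha
        simp only [List.mem_reverse, List.mem_map] at ha
        obtain ⟨b, hb, rfl⟩ := ha
        rcases h1 b hb with h | h
        · exact Or.inr (by simpa using h)
        · exact Or.inl h
      · rw [← p1, List.prod_inv_reverse]

lemma wlen_spec {G : Type*} [Group G] {Y : Set G} (hgen : Subgroup.closure Y = ⊤)
    (g : G) :
    ∃ l : List G, (∀ a ∈ l, a ∈ Y ∨ a⁻¹ ∈ Y) ∧ l.prod = g ∧ l.length = wlen Y g := by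
  have hne : {k | ∃ l : List G, (∀ a ∈ l, a ∈ Y ∨ a⁻¹ ∈ Y) ∧ l.prod = g ∧ l.length = k}.Nonempty := by
    obtain ⟨l, h1, h2⟩ := exists_word (Y := Y) (g := g) (by rw [hgen]; trivial)
    exact ⟨l.length, l, h1, h2, rfl⟩
  exact Nat.sInf_mem hne

lemma wlen_le {G : Type*} [Group G] {Y : Set G} {g : G} {l : List G}
    (h1 : ∀ a ∈ l, a ∈ Y ∨ a⁻¹ ∈ Y) (h2 : l.prod = g) : wlen Y g ≤ l.length :=
  Nat.sInf_le ⟨l, h1, h2, rfl⟩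

/-- Let `G = ⟨X⟩`, `M` the submonoid generated by `S ⊆ G`; `G' = ⟨X'⟩`,
`M'` the submonoid generated by `S' ⊆ G'`, graded with respect to `S'`. Let `φ : G → G'`
be a homomorphism with `φ(S) ⊆ S'`, and let `λ'` be a non-decreasing upper distortion
function for `M'` in `G'` (every factorization of `h ∈ M'` over `S'` has length at most
`λ'(|h|_{X'})`). If `C` bounds `|φ(x)|_{X'}` for all `x ∈ X`, then `M` is graded with
respect to `S` and `λ_S(g) ≤ λ'(C·|g|_X)`: every factorization of `g` over `S` has length
at most `λ'(C·|g|_X)`. -/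
theorem stmt16 {G G' : Type*} [Group G] [Group G']
    (X S : Finset G) (X' S' : Finset G')
    (hgenG : Subgroup.closure (X : Set G) = ⊤)
    (hgenG' : Subgroup.closure (X' : Set G') = ⊤)
    (hgr' : IsGraded (S' : Set G'))
    (φ : G →* G') (hφS : ∀ s ∈ S, φ s ∈ S')
    (lam' : ℕ → ℕ) (hmono : Monotone lam')
    (hup' : ∀ h : G', ∀ l ∈ Exprs (S' : Set G') h, l.length ≤ lam' (wlen (X' : Set G') h))
    (C : ℕ) (hC : ∀ x ∈ X, wlen (X' : Set G') (φ x) ≤ C) :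
    IsGraded (S : Set G) ∧
      ∀ g : G, ∀ l ∈ Exprs (S : Set G) g,
        l.length ≤ lam' (C * wlen (X : Set G) g) := by
  -- word length of images of generators (or inverses of generators) is ≤ C
  have hCgen : ∀ a : G, (a ∈ X ∨ a⁻¹ ∈ X) → wlen (X' : Set G') (φ a) ≤ C := by
    intro a ha
    rcases ha with h | h
    · exact hC a h
    · -- φ a = (φ a⁻¹)⁻¹
      obtain ⟨l, hl1, hl2, hl3⟩ := wlen_spec hgenG' (φ a⁻¹)
      have : wlen (X' : Set G') (φ a) ≤ l.length := by
        have := wlen_le (Y := (X' : Set G')) (l := (l.map Inv.inv).reverse) (g := φ a) ?_ ?_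
        · simpa using this
        · intro b hb
          simp only [List.mem_reverse, List.mem_map] at hb
          obtain ⟨c, hc, rfl⟩ := hb
          rcases hl1 c hc with h' | h'
          · exact Or.inr (by simpa using h')
          · exact Or.inl h'
        · have hpa : φ a = (l.prod)⁻¹ := by rw [hl2]; simp
          rw [hpa, List.prod_inv_reverse]
      calc wlen (X' : Set G') (φ a) ≤ l.length := this
        _ = wlen (X' : Set G') (φ a⁻¹) := hl3
        _ ≤ C := hC a⁻¹ h
  -- key estimate: wlen X' (φ g) ≤ C * wlen X g
  have key : ∀ g : G, wlen (X' : Set G') (φ g) ≤ C * wlen (X : Set G) g := by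
    intro g
    obtain ⟨l, hl1, hl2, hl3⟩ := wlen_spec hgenG g
    rw [← hl3, ← hl2]
    clear hl2 hl3
    induction l with
    | nil =>
        have h0 : wlen (X' : Set G') (1:G') ≤ 0 :=
          wlen_le (l := ([] : List G')) (by simp) (by simp)
        simpa using h0
    | cons a t ih =>
        have ha := hCgen a (hl1 a List.mem_cons_self)
        have ht := ih (fun b hb => hl1 b (List.mem_cons_of_mem a hb))
        -- wlen of product ≤ sum
        obtain ⟨l1, h11, h12, h13⟩ := wlen_spec hgenG' (φ a)
        obtain ⟨l2, h21, h22, h23⟩ := wlen_spec hgenG' (φ t.prod)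
        have hmul : wlen (X' : Set G') (φ (a * t.prod)) ≤ l1.length + l2.length := by
          have := wlen_le (l := l1 ++ l2)
            (fun b hb => (List.mem_append.1 hb).elim (h11 b) (h21 b))
            (by rw [List.prod_append, h12, h22, ← map_mul])
          simpa using this
        calc wlen (X' : Set G') (φ ((a :: t).prod)) = wlen (X' : Set G') (φ (a * t.prod)) := by
              simp
          _ ≤ l1.length + l2.length := hmul
          _ = wlen (X' : Set G') (φ a) + wlen (X' : Set G') (φ t.prod) := by rw [h13, h23]
          _ ≤ C + C * t.length := Nat.add_le_add ha ht
          _ = C * (a :: t).length := by simp [List.length_cons, Nat.mul_succ]; ring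
  -- the length bound
  have hbound : ∀ g : G, ∀ l ∈ Exprs (S : Set G) g,
      l.length ≤ lam' (C * wlen (X : Set G) g) := by
    intro g l hl
    obtain ⟨hl1, hl2⟩ := hl
    have hl' : l.map φ ∈ Exprs (S' : Set G') (φ g) := by
      constructor
      · intro b hb
        obtain ⟨c, hc, rfl⟩ := List.mem_map.1 hb
        exact hφS c (hl1 c hc)
      · rw [← hl2]; exact (List.prod_hom l φ)
    have := hup' (φ g) (l.map φ) hl'
    rw [List.length_map] at this
    exact this.trans (hmono (key g))
  refine ⟨?_, hbound⟩
  intro g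
  have hsub : Exprs (S : Set G) g ⊆
      (fun l : List ↥(S : Set G) => l.map Subtype.val) ''
        {l : List ↥(S : Set G) | l.length ≤ lam' (C * wlen (X : Set G) g)} := by
    intro l hl
    refine ⟨l.attachWith _ (fun a ha => hl.1 a ha), ?_, ?_⟩
    · simp only [Set.mem_setOf_eq, List.length_attachWith]
      exact hbound g l hl
    · simp [List.attachWith, List.map_pmap]
  have hfin : Set.Finite {l : List ↥(S : Set G) | l.length ≤ lam' (C * wlen (X : Set G) g)} := by
    have : Finite ↥(S : Set G) := (S.finite_toSet).to_subtype
    exact List.finite_length_le _ _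
  exact Set.Finite.subset (hfin.image _) hsub
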